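/- Let b : ℝⁿ → ℝ and f : ℝⁿ → ℝⁿ, g : ℝⁿ → ℝ^{n×m} be polynomial. Suppose there exist a real number ρ ≤ 0, polynomials η, θ₁,…,θ_m, and SOS polynomials α and Λ such that α(x)(∇b(x)ᵀf(x)) + Σ_{i=1}^{m} θ_i(x)[∇b(x)ᵀg(x)]_i + η(x)b(x) + ρΛ(x) − 1 is SOS. Then for every x ∈ ℝⁿ with b(x) = 0 and ∇b(x)ᵀg(x) = 0 one has ∇b(x)ᵀf(x) > 0; consequently, there is no x with b(x) = 0, ∇b(x)ᵀg(x) = 0, and ∇b(x)ᵀf(x) ≤ 0, and for every x with b(x) = 0 there exists u ∈ ℝᵐ with ∇b(x)ᵀ(f(x) + g(x)u) > 0. -/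

import Mathlib

open MvPolynomial

/-- A polynomial is a sum of squares. -/
def IsSOS {σ : Type*} (f : MvPolynomial σ ℝ) : Prop :=
  ∃ (k : ℕ) (g : Fin k → MvPolynomial σ ℝ), f = ∑ i, g i ^ 2

lemma IsSOS.eval_nonneg {σ : Type*} {f : MvPolynomial σ ℝ} (h : IsSOS f)
    (x : σ → ℝ) : 0 ≤ eval x f := by
  obtain ⟨k, g, rfl⟩ := h
  simp only [map_sum, map_pow]
  exact Finset.sum_nonneg fun i _ => sq_nonneg _

/-- soundness of the alternating-descent SOS certificate. If `ρ ≤ 0` and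
`α (∇bᵀf) + Σ θᵢ (∇bᵀg)ᵢ + η b + ρΛ − 1` is SOS with `α, Λ` SOS, then wherever
`b = 0` and `∇bᵀg = 0` one has `∇bᵀf > 0`; consequently no point satisfies
`b = 0`, `∇bᵀg = 0`, `∇bᵀf ≤ 0`, and at every point of `{b = 0}` some input `u`
makes `∇bᵀ(f + gu) > 0`. -/
theorem alternating_descent_certificate {n m : ℕ}
    (b : MvPolynomial (Fin n) ℝ)
    (f : Fin n → MvPolynomial (Fin n) ℝ)
    (g : Fin n → Fin m → MvPolynomial (Fin n) ℝ)
    (ρ : ℝ) (hρ : ρ ≤ 0)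
    (η : MvPolynomial (Fin n) ℝ) (θ : Fin m → MvPolynomial (Fin n) ℝ)
    (α Λ : MvPolynomial (Fin n) ℝ) (hα : IsSOS α) (hΛ : IsSOS Λ)
    (hcert : IsSOS (α * (∑ k, pderiv k b * f k)
      + (∑ i : Fin m, θ i * ∑ k, pderiv k b * g k i)
      + η * b + MvPolynomial.C ρ * Λ - 1)) :
    (∀ x : Fin n → ℝ, eval x b = 0 →
      (∀ i : Fin m, ∑ k, eval x (pderiv k b) * eval x (g k i) = 0) →
      0 < ∑ k, eval x (pderiv k b) * eval x (f k)) ∧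
    (¬ ∃ x : Fin n → ℝ, eval x b = 0 ∧
      (∀ i : Fin m, ∑ k, eval x (pderiv k b) * eval x (g k i) = 0) ∧
      ∑ k, eval x (pderiv k b) * eval x (f k) ≤ 0) ∧
    (∀ x : Fin n → ℝ, eval x b = 0 → ∃ u : Fin m → ℝ,
      0 < ∑ k, eval x (pderiv k b) * (eval x (f k) + ∑ j, eval x (g k j) * u j)) := by
  have main : ∀ x : Fin n → ℝ, eval x b = 0 →
      (∀ i : Fin m, ∑ k, eval x (pderiv k b) * eval x (g k i) = 0) →
      0 < ∑ k, eval x (pderiv k b) * eval x (f k) := by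
    intro x hb hg
    have hc := hcert.eval_nonneg x
    simp only [map_sub, map_add, map_mul, map_sum, map_one, eval_C, hb, mul_zero] at hc
    simp only [hg, mul_zero, Finset.sum_const_zero, add_zero] at hc
    have hαx := hα.eval_nonneg x
    have hΛx := hΛ.eval_nonneg x
    have hρΛ : ρ * eval x Λ ≤ 0 := mul_nonpos_of_nonpos_of_nonneg hρ hΛx
    by_contra hLe
    push_neg at hLe
    nlinarith [mul_nonpos_of_nonneg_of_nonpos hαx hLe]
  refine ⟨main, ?_, ?_⟩
  · rintro ⟨x, hb, hg, hf⟩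
    exact absurd (main x hb hg) (not_lt.mpr hf)
  · intro x hb
    by_cases hall : ∀ i : Fin m, ∑ k, eval x (pderiv k b) * eval x (g k i) = 0
    · refine ⟨0, ?_⟩
      have := main x hb hall
      simpa using this
    · push_neg at hall
      obtain ⟨j, hj⟩ := hall
      set c : ℝ := ∑ k, eval x (pderiv k b) * eval x (g k j) with hc
      set L : ℝ := ∑ k, eval x (pderiv k b) * eval x (f k) with hL
      refine ⟨fun i => if i = j then (1 - L) / c else 0, ?_⟩
      have key : ∑ k, eval x (pderiv k b) * (eval x (f k) +
          ∑ i, eval x (g k i) * (if i = j then (1 - L) / c else 0)) = 1 := by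
        have expand : ∀ k : Fin n, eval x (pderiv k b) * (eval x (f k) +
            ∑ i, eval x (g k i) * (if i = j then (1 - L) / c else 0))
            = eval x (pderiv k b) * eval x (f k)
              + (eval x (pderiv k b) * eval x (g k j)) * ((1 - L) / c) := by
          intro k
          simp only [mul_ite, mul_zero, Finset.sum_ite_eq' Finset.univ j, Finset.mem_univ,
            if_true, mul_add, mul_assoc]
        rw [Finset.sum_congr rfl fun k _ => expand k, Finset.sum_add_distrib,
          ← Finset.sum_mul, ← hc, ← hL]
        field_simp
        ring
      rw [key]; norm_num
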